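/- Let G be a tree (connected acyclic simple graph) with graph distance δ. For a subtree S and r ≥ 0, define S^[r] as the set of vertices at distance at most r from S. If S₁ and S₂ are subtrees (connected subgraphs) of G with nonempty intersection, then (S₁ ∩ S₂)^[r] = S₁^[r] ∩ S₂^[r] for every natural number r. -/

import Mathlib

open SimpleGraph Walk

section Aux

variable {V : Type*} {G : SimpleGraph V}

/-- In a tree, every path is a geodesic. -/
private lemma tree_path_length (hG : G.IsTree) {a b : V} {p : G.Walk a b}
    (hp : p.IsPath) : p.length = G.dist a b := by
  classical
  refine le_antisymm ?_ (SimpleGraph.dist_le p)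
  obtain ⟨w, hw⟩ := (hG.isConnected a b).exists_walk_length_eq_dist
  have hbp := (hG.existsUnique_path a b).unique hp w.bypass_isPath
  calc p.length = w.bypass.length := by rw [hbp]
    _ ≤ w.length := w.length_bypass_le
    _ = G.dist a b := hw

/-- In a tree, a path between two vertices of a connected set stays in the set. -/
private lemma path_support_subset (hG : G.IsTree) {S : Set V}
    (hS : (G.induce S).Connected) {a b : V} (ha : a ∈ S) (hb : b ∈ S)
    {p : G.Walk a b} (hp : p.IsPath) : ∀ v ∈ p.support, v ∈ S := by
  classical
  obtain ⟨w'⟩ := hS.preconnected ⟨a, ha⟩ ⟨b, hb⟩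
  let w : G.Walk a b := w'.map (SimpleGraph.Embedding.induce S).toHom
  have hsub : ∀ v ∈ w.support, v ∈ S := by
    intro v hv
    rw [show w.support = w'.support.map (SimpleGraph.Embedding.induce S).toHom from
      Walk.support_map .., List.mem_map] at hv
    obtain ⟨u, _, rfl⟩ := hv
    exact u.2
  have heq := (hG.existsUnique_path a b).unique hp w.bypass_isPath
  intro v hv
  rw [heq] at hv
  exact hsub v (w.support_bypass_subset hv)

/-- Given two paths ending at the same vertex, there is a "meeting" vertex `m` on
both, such that going first-path-to-`m` then back along second path is a path. -/
private lemma exists_meet {y : V} :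
    ∀ {x p0 : V} (P : G.Walk x p0) (Q : G.Walk y p0), Q.IsPath → P.IsPath →
    ∃ (m : V) (A : G.Walk x m) (B : G.Walk m y), (A.append B).IsPath ∧
      (∀ v ∈ A.support, v ∈ P.support) ∧ (∀ v ∈ B.support, v ∈ Q.support) := by
  classical
  intro x p0 P
  induction P with
  | nil =>
    intro Q hQ _
    refine ⟨_, Walk.nil, Q.reverse, ?_, ?_, ?_⟩
    · simpa [Walk.isPath_reverse_iff] using hQ
    · simp
    · intro v hv
      rw [Walk.support_reverse, List.mem_reverse] at hv
      exact hv
  | cons h P' ih =>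
    rename_i x x' _
    intro Q hQ hP
    rw [Walk.cons_isPath_iff] at hP
    by_cases hx : x ∈ Q.support
    · refine ⟨x, Walk.nil, (Q.takeUntil x hx).reverse, ?_, ?_, ?_⟩
      · simpa [Walk.isPath_reverse_iff] using hQ.takeUntil hx
      · simp
      · intro v hv
        rw [Walk.support_reverse, List.mem_reverse] at hv
        exact Q.support_takeUntil_subset hx hv
    · obtain ⟨m, A', B, hAB, hA', hB⟩ := ih Q hQ hP.1
      refine ⟨m, Walk.cons h A', B, ?_, ?_, hB⟩
      · rw [Walk.cons_append, Walk.cons_isPath_iff]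
        refine ⟨hAB, ?_⟩
        rw [Walk.mem_support_append_iff]
        rintro (hxa | hxb)
        · exact hP.2 (hA' _ hxa)
        · exact hx (hB _ hxb)
      · intro v hv
        rw [Walk.support_cons, List.mem_cons] at hv
        rcases hv with rfl | hv
        · exact Walk.start_mem_support _
        · rw [Walk.support_cons]
          exact List.mem_cons_of_mem _ (hA' _ hv)

/-- For two vertices on a path, one lies on a path from the other to the endpoint. -/
private lemma exists_suffix {x p0 : V} {P : G.Walk x p0} (hP : P.IsPath) {m m' : V}
    (hm : m ∈ P.support) (hm' : m' ∈ P.support) :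
    (∃ W : G.Walk m p0, W.IsPath ∧ m' ∈ W.support) ∨
    (∃ W : G.Walk m' p0, W.IsPath ∧ m ∈ W.support) := by
  classical
  set T := P.takeUntil m hm with hT
  set D := P.dropUntil m hm with hD
  have hsplit : T.support ++ D.support.tail = P.support := by
    rw [← Walk.support_append, Walk.take_spec]
  have hnodup : (T.support ++ D.support.tail).Nodup := by
    rw [hsplit]; exact hP.support_nodup
  by_cases hcase : m' ∈ D.support
  · exact Or.inl ⟨D, hP.dropUntil hm, hcase⟩
  · have hm'T : m' ∈ T.support := by
      have := hm'
      rw [← hsplit, List.mem_append] at this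
      rcases this with h' | h'
      · exact h'
      · exact absurd (List.mem_of_mem_tail h') hcase
    refine Or.inr ⟨(T.dropUntil m' hm'T).append D, ?_, ?_⟩
    · rw [Walk.isPath_def, Walk.support_append]
      have hTnd : (T.dropUntil m' hm'T).support.Nodup :=
        ((hP.takeUntil hm).dropUntil hm'T).support_nodup
      have hDnd : D.support.tail.Nodup := hnodup.of_append_right
      have hdisj : (T.dropUntil m' hm'T).support.Disjoint D.support.tail := by
        intro a ha ha'
        exact (List.disjoint_of_nodup_append hnodup)
          (T.support_dropUntil_subset hm'T ha) ha'
      exact hTnd.append hDnd hdisj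
    · rw [Walk.mem_support_append_iff]
      exact Or.inl (Walk.end_mem_support _)

end Aux

theorem stmt_0 {V : Type*} (G : SimpleGraph V) (hG : G.IsTree)
    (S₁ S₂ : Set V)
    (h1 : (G.induce S₁).Connected) (h2 : (G.induce S₂).Connected)
    (hne : (S₁ ∩ S₂).Nonempty) (r : ℕ) :
    {x : V | ∃ y ∈ S₁ ∩ S₂, G.dist x y ≤ r} =
      {x : V | ∃ y ∈ S₁, G.dist x y ≤ r} ∩ {x : V | ∃ y ∈ S₂, G.dist x y ≤ r} := by
  obtain ⟨p0, hp01, hp02⟩ := hne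
  ext x
  simp only [Set.mem_setOf_eq, Set.mem_inter_iff]
  constructor
  · rintro ⟨y, ⟨hy1, hy2⟩, hd⟩
    exact ⟨⟨y, hy1, hd⟩, ⟨y, hy2, hd⟩⟩
  · rintro ⟨⟨y₁, hy₁, hd₁⟩, ⟨y₂, hy₂, hd₂⟩⟩
    obtain ⟨P, hP, -⟩ := hG.existsUnique_path x p0
    obtain ⟨Q₁, hQ₁, -⟩ := hG.existsUnique_path y₁ p0
    obtain ⟨Q₂, hQ₂, -⟩ := hG.existsUnique_path y₂ p0
    obtain ⟨m₁, A₁, B₁, hAB₁, hA₁, hB₁⟩ := exists_meet P Q₁ hQ₁ hP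
    obtain ⟨m₂, A₂, B₂, hAB₂, hA₂, hB₂⟩ := exists_meet P Q₂ hQ₂ hP
    have hm₁P : m₁ ∈ P.support := hA₁ _ A₁.end_mem_support
    have hm₂P : m₂ ∈ P.support := hA₂ _ A₂.end_mem_support
    have hm₁S : m₁ ∈ S₁ :=
      path_support_subset hG h1 hy₁ hp01 hQ₁ _ (hB₁ _ B₁.start_mem_support)
    have hm₂S : m₂ ∈ S₂ :=
      path_support_subset hG h2 hy₂ hp02 hQ₂ _ (hB₂ _ B₂.start_mem_support)
    have hd₁' : G.dist x m₁ ≤ r := by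
      calc G.dist x m₁ ≤ A₁.length := SimpleGraph.dist_le A₁
        _ ≤ (A₁.append B₁).length := by rw [Walk.length_append]; omega
        _ = G.dist x y₁ := tree_path_length hG hAB₁
        _ ≤ r := hd₁
    have hd₂' : G.dist x m₂ ≤ r := by
      calc G.dist x m₂ ≤ A₂.length := SimpleGraph.dist_le A₂
        _ ≤ (A₂.append B₂).length := by rw [Walk.length_append]; omega
        _ = G.dist x y₂ := tree_path_length hG hAB₂
        _ ≤ r := hd₂
    rcases exists_suffix hP hm₁P hm₂P with ⟨W, hW, hmem⟩ | ⟨W, hW, hmem⟩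
    · exact ⟨m₂, ⟨path_support_subset hG h1 hm₁S hp01 hW _ hmem, hm₂S⟩, hd₂'⟩
    · exact ⟨m₁, ⟨hm₁S, path_support_subset hG h2 hm₂S hp02 hW _ hmem⟩, hd₁'⟩
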